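/- For any n ≥ 1 and real exponents β₁, …, β_n > -1, the simplex integral ∫_{0<t₁<…<t_n<t} ∏_{j=1}^n (t_{j+1}-t_j)^{β_j} dt₁…dt_n equals (∏_{j=1}^n Γ(β_j+1)) / Γ(∑_{j=1}^n β_j + n + 1) · t^{∑_{j=1}^n β_j + n}, where t_{n+1} := t. -/

import Mathlib

open MeasureTheory Real
open scoped ENNReal

lemma beta01_integrable {a b : ℝ} (ha : -1 < a) (hb : -1 < b) :
    IntegrableOn (fun x : ℝ => x ^ a * (1 - x) ^ b) (Set.Ioc 0 1) volume := by
  have hc : IntervalIntegrable (fun x : ℝ => (x:ℂ) ^ (a:ℂ) * (1 - (x:ℂ)) ^ (b:ℂ)) volume 0 1 := by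
    simpa using Complex.betaIntegral_convergent (u := ((a+1:ℝ):ℂ)) (v := ((b+1:ℝ):ℂ))
      (by simp; linarith) (by simp; linarith)
  have hc' : IntegrableOn (fun x : ℝ => (x:ℂ) ^ (a:ℂ) * (1 - (x:ℂ)) ^ (b:ℂ)) (Set.Ioc 0 1) volume :=
    (intervalIntegrable_iff_integrableOn_Ioc_of_le (by norm_num)).mp hc
  refine IntegrableOn.congr_fun hc'.re (fun x hx => ?_) measurableSet_Ioc
  obtain ⟨hx0, hx1⟩ := hx
  have h1 : ((1:ℂ) - (x:ℝ)) = (((1 - x : ℝ)) : ℂ) := by push_cast; ring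
  rw [h1, ← Complex.ofReal_cpow hx0.le, ← Complex.ofReal_cpow (by linarith : (0:ℝ) ≤ 1 - x),
    ← Complex.ofReal_mul]
  simp

lemma beta01 {a b : ℝ} (ha : -1 < a) (hb : -1 < b) :
    ∫ x in (0:ℝ)..1, x ^ a * (1 - x) ^ b
      = Real.Gamma (a+1) * Real.Gamma (b+1) / Real.Gamma (a+b+2) := by
  have key := Complex.Gamma_mul_Gamma_eq_betaIntegral (s := ((a+1:ℝ):ℂ)) (t := ((b+1:ℝ):ℂ))
    (by simp; linarith) (by simp; linarith)
  have hBeta : Complex.betaIntegral ((a+1:ℝ):ℂ) ((b+1:ℝ):ℂ)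
      = ((∫ x in (0:ℝ)..1, x ^ a * (1 - x) ^ b : ℝ) : ℂ) := by
    rw [Complex.betaIntegral, ← intervalIntegral.integral_ofReal]
    refine intervalIntegral.integral_congr (fun x hx => ?_)
    rw [Set.uIcc_of_le (by norm_num : (0:ℝ) ≤ 1)] at hx
    obtain ⟨hx0, hx1⟩ := hx
    push_cast
    rw [Complex.ofReal_cpow hx0, Complex.ofReal_cpow (by linarith)]
    push_cast
    norm_num
  rw [hBeta] at key
  have key3 : Real.Gamma (a+1) * Real.Gamma (b+1)
      = Real.Gamma (a+b+2) * ∫ x in (0:ℝ)..1, x ^ a * (1 - x) ^ b := by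
    have : ((Real.Gamma (a+1) * Real.Gamma (b+1) : ℝ) : ℂ)
        = ((Real.Gamma (a+b+2) * ∫ x in (0:ℝ)..1, x ^ a * (1 - x) ^ b : ℝ) : ℂ) := by
      push_cast
      rw [← Complex.Gamma_ofReal, ← Complex.Gamma_ofReal, ← Complex.Gamma_ofReal]
      convert key using 3 <;> push_cast <;> ring
    exact_mod_cast this
  have hpos : 0 < Real.Gamma (a+b+2) := Real.Gamma_pos_of_pos (by linarith)
  rw [key3]
  field_simp

lemma beta_Ioo {p q a b : ℝ} (hpq : p < q) (ha : -1 < a) (hb : -1 < b) :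
    ∫⁻ x in Set.Ioo p q, ENNReal.ofReal ((x - p) ^ a * (q - x) ^ b)
      = ENNReal.ofReal (Real.Gamma (a+1) * Real.Gamma (b+1) / Real.Gamma (a+b+2)
          * (q - p) ^ (a+b+1)) := by
  set c : ℝ := q - p with hc_def
  have hc : 0 < c := by simp [hc_def]; linarith
  set B : ℝ := Real.Gamma (a+1) * Real.Gamma (b+1) / Real.Gamma (a+b+2) with hB_def
  -- pointwise identity on Ioo
  have hpt : ∀ x ∈ Set.Ioo p q,
      c ^ (a+b) * (((x - p) * c⁻¹) ^ a * (1 - (x - p) * c⁻¹) ^ b)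
        = (x - p) ^ a * (q - x) ^ b := by
    intro x hx
    obtain ⟨h1, h2⟩ := hx
    have hxp : (0:ℝ) ≤ x - p := by linarith
    have hqx : (0:ℝ) ≤ q - x := by linarith
    have e1 : (1 : ℝ) - (x - p) * c⁻¹ = (q - x) * c⁻¹ := by
      field_simp
      ring
    rw [e1, Real.mul_rpow hxp (by positivity), Real.mul_rpow hqx (by positivity),
      Real.inv_rpow hc.le, Real.inv_rpow hc.le, Real.rpow_add hc]
    have hca : c ^ a ≠ 0 := by positivity
    have hcb : c ^ b ≠ 0 := by positivity
    field_simp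
  -- integrability on Ioo p q
  have hint01 : IntervalIntegrable (fun x : ℝ => x ^ a * (1 - x) ^ b) volume 0 1 :=
    (intervalIntegrable_iff_integrableOn_Ioc_of_le (by norm_num)).mpr (beta01_integrable ha hb)
  have hint2 : IntervalIntegrable (fun x : ℝ => (x * c⁻¹) ^ a * (1 - x * c⁻¹) ^ b) volume 0 c := by
    have := hint01.comp_mul_right (c := c⁻¹)
    rwa [zero_div, one_div, inv_inv] at this
  have hint3 : IntervalIntegrable (fun x : ℝ => ((x - p) * c⁻¹) ^ a * (1 - (x - p) * c⁻¹) ^ b)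
      volume p q := by
    have := hint2.comp_sub_right p
    rw [zero_add] at this
    have heq : c + p = q := by simp [hc_def]
    rwa [heq] at this
  have hintIoo : IntegrableOn (fun x : ℝ => (x - p) ^ a * (q - x) ^ b) (Set.Ioo p q) volume := by
    have h4 : IntegrableOn (fun x : ℝ => ((x - p) * c⁻¹) ^ a * (1 - (x - p) * c⁻¹) ^ b)
        (Set.Ioo p q) volume :=
      ((intervalIntegrable_iff_integrableOn_Ioc_of_le hpq.le).mp hint3).mono_set
        Set.Ioo_subset_Ioc_self
    have h5 := h4.const_mul (c ^ (a+b))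
    exact IntegrableOn.congr_fun h5 (fun x hx => hpt x hx) measurableSet_Ioo
  -- value of the Bochner integral
  have hval : ∫ x in Set.Ioo p q, (x - p) ^ a * (q - x) ^ b = B * c ^ (a+b+1) := by
    rw [← MeasureTheory.integral_Ioc_eq_integral_Ioo,
      ← intervalIntegral.integral_of_le hpq.le]
    have e1 : (∫ x in p..q, (x - p) ^ a * (q - x) ^ b)
        = ∫ x in (0:ℝ)..c, x ^ a * (c - x) ^ b := by
      have hfun : (fun x : ℝ => (x - p) ^ a * (q - x) ^ b)
          = fun x : ℝ => (x - p) ^ a * (c - (x - p)) ^ b := by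
        funext x; congr 2; simp [hc_def]
      rw [hfun, intervalIntegral.integral_comp_sub_right (fun y => y ^ a * (c - y) ^ b) p,
        sub_self, hc_def]
    have e2 : c • (∫ x in (0:ℝ)..1, (c * x) ^ a * (c - c * x) ^ b)
        = ∫ x in (0:ℝ)..c, x ^ a * (c - x) ^ b := by
      have := intervalIntegral.smul_integral_comp_mul_left
        (f := fun y : ℝ => y ^ a * (c - y) ^ b) (a := 0) (b := 1) c
      simpa using this
    have e3 : (∫ x in (0:ℝ)..1, (c * x) ^ a * (c - c * x) ^ b)
        = c ^ (a+b) * ∫ x in (0:ℝ)..1, x ^ a * (1 - x) ^ b := by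
      rw [← intervalIntegral.integral_const_mul]
      refine intervalIntegral.integral_congr (fun x hx => ?_)
      rw [Set.uIcc_of_le (by norm_num : (0:ℝ) ≤ 1)] at hx
      obtain ⟨hx0, hx1⟩ := hx
      have hcc : c - c * x = c * (1 - x) := by ring
      rw [hcc, Real.mul_rpow hc.le hx0, Real.mul_rpow hc.le (by linarith),
        Real.rpow_add hc]
      ring
    rw [e1, ← e2, e3, beta01 ha hb, smul_eq_mul, ← hB_def]
    have hsplit : c ^ (a+b+1) = c * c ^ (a+b) := by
      rw [show a+b+1 = 1+(a+b) by ring, Real.rpow_add hc, Real.rpow_one]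
    rw [hsplit]; ring
  -- convert to lintegral
  rw [← hval, ← MeasureTheory.ofReal_integral_eq_lintegral_ofReal hintIoo]
  refine (ae_restrict_iff' measurableSet_Ioo).mpr (ae_of_all _ fun x hx => ?_)
  obtain ⟨h1, h2⟩ := hx
  have hxp : (0:ℝ) ≤ x - p := by linarith
  have hqx : (0:ℝ) ≤ q - x := by linarith
  positivity


/-- The open simplex `0 < u 0 < u 1 < ... < u (n-1) < t`. -/
def simplexSet (n : ℕ) (t : ℝ) : Set (Fin n → ℝ) :=
  {u : Fin n → ℝ | (∀ j, 0 < u j ∧ u j < t) ∧ StrictMono u}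

/-- The integrand `∏ (u_{j+1} - u_j) ^ β j` with `u_n := t`. -/
noncomputable def simplexIntegrand (n : ℕ) (t : ℝ) (β : Fin n → ℝ) (u : Fin n → ℝ) : ℝ :=
  ∏ j : Fin n, ((if h : (j : ℕ) + 1 < n then u ⟨(j : ℕ) + 1, h⟩ else t) - u j) ^ (β j)

lemma measurableSet_simplexSet (n : ℕ) (t : ℝ) : MeasurableSet (simplexSet n t) := by
  have : simplexSet n t =
      (⋂ j, ({u : Fin n → ℝ | 0 < u j} ∩ {u : Fin n → ℝ | u j < t})) ∩
        (⋂ (i : Fin n) (j : Fin n) (_ : i < j), {u : Fin n → ℝ | u i < u j}) := by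
    ext u
    simp only [simplexSet, Set.mem_setOf_eq, Set.mem_inter_iff, Set.mem_iInter,
      Set.mem_inter_iff, Set.mem_setOf_eq]
    constructor
    · rintro ⟨h1, h2⟩
      exact ⟨fun j => h1 j, fun i j hij => h2 hij⟩
    · rintro ⟨h1, h2⟩
      exact ⟨fun j => h1 j, fun i j hij => h2 i j hij⟩
  rw [this]
  refine MeasurableSet.inter ?_ ?_
  · exact MeasurableSet.iInter fun j =>
      ((measurableSet_lt measurable_const (measurable_pi_apply j)).inter
        (measurableSet_lt (measurable_pi_apply j) measurable_const))
  · exact MeasurableSet.iInter fun i => MeasurableSet.iInter fun j =>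
      MeasurableSet.iInter fun _ =>
        measurableSet_lt (measurable_pi_apply i) (measurable_pi_apply j)

lemma measurable_simplexIntegrand (n : ℕ) (t : ℝ) (β : Fin n → ℝ) :
    Measurable (simplexIntegrand n t β) := by
  unfold simplexIntegrand
  refine Finset.measurable_prod _ fun j _ => ?_
  split_ifs with h
  · fun_prop
  · fun_prop


lemma simplex_lintegral (m : ℕ) : ∀ (t : ℝ), 0 < t → ∀ β : Fin (m+1) → ℝ, (∀ j, -1 < β j) →
    ∫⁻ u in simplexSet (m+1) t, ENNReal.ofReal (simplexIntegrand (m+1) t β u)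
      = ENNReal.ofReal ((∏ j, Real.Gamma (β j + 1))
          / Real.Gamma ((∑ j, β j) + (m+1 : ℕ) + 1) * t ^ ((∑ j, β j) + (m+1 : ℕ))) := by
  induction m with
  | zero =>
    intro t ht β hβ
    -- one-dimensional case
    have hmem : ∀ u : Fin 1 → ℝ, u ∈ simplexSet 1 t ↔ u 0 ∈ Set.Ioo (0:ℝ) t := by
      intro u
      constructor
      · rintro ⟨h1, _⟩; exact ⟨(h1 0).1, (h1 0).2⟩
      · rintro ⟨h1, h2⟩
        refine ⟨fun j => ?_, Subsingleton.strictMono u⟩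
        have : j = 0 := Subsingleton.elim _ _
        rw [this]; exact ⟨h1, h2⟩
    have hval : ∀ u : Fin 1 → ℝ, simplexIntegrand 1 t β u = (t - u 0) ^ (β 0) := by
      intro u
      unfold simplexIntegrand
      rw [Fin.prod_univ_one]
      norm_num
    -- move to ℝ via the equivalence
    have hmp := (volume_preserving_funUnique (Fin 1) ℝ).symm
      (MeasurableEquiv.funUnique (Fin 1) ℝ)
    have hmeas : Measurable fun u : Fin 1 → ℝ =>
        (simplexSet 1 t).indicator (fun u => ENNReal.ofReal (simplexIntegrand 1 t β u)) u :=
      ((measurable_simplexIntegrand 1 t β).ennreal_ofReal).indicator (measurableSet_simplexSet 1 t)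
    rw [← lintegral_indicator (measurableSet_simplexSet 1 t)]
    show ∫⁻ u, (simplexSet 1 t).indicator (fun u => ENNReal.ofReal (simplexIntegrand 1 t β u)) u = _
    refine Eq.trans (hmp.lintegral_comp hmeas).symm ?_
    have hsymm : ∀ x : ℝ, (MeasurableEquiv.funUnique (Fin 1) ℝ).symm x = fun _ : Fin 1 => x :=
      fun x => rfl
    have heq : ∀ x : ℝ,
        (simplexSet 1 t).indicator (fun u => ENNReal.ofReal (simplexIntegrand 1 t β u))
          ((MeasurableEquiv.funUnique (Fin 1) ℝ).symm x)
        = (Set.Ioo (0:ℝ) t).indicator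
            (fun x => ENNReal.ofReal ((x - 0) ^ (0:ℝ) * (t - x) ^ (β 0))) x := by
      intro x
      rw [hsymm]
      by_cases hx : x ∈ Set.Ioo (0:ℝ) t
      · rw [Set.indicator_of_mem hx,
          Set.indicator_of_mem (by rw [hmem]; exact hx), hval]
        simp [Real.rpow_zero]
      · rw [Set.indicator_of_notMem hx,
          Set.indicator_of_notMem (by rw [hmem]; exact hx)]
    rw [lintegral_congr heq, lintegral_indicator measurableSet_Ioo,
      beta_Ioo ht (by norm_num) (hβ 0)]
    rw [sub_zero, Fin.prod_univ_one, Fin.sum_univ_one]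
    norm_num [Real.Gamma_one]
    ring_nf
  | succ m IH =>
    intro t ht β hβ
    set βa := β (Fin.castSucc (Fin.last m)) with hβa_def
    set βb := β (Fin.last (m+1)) with hβb_def
    have hβa : -1 < βa := hβ _
    have hβb : -1 < βb := hβ _
    set β' : Fin (m+1) → ℝ :=
      Fin.snoc (fun j : Fin m => β j.castSucc.castSucc) (βa + βb + 1) with hβ'_def
    have hβ' : ∀ j, -1 < β' j := by
      intro j
      refine Fin.lastCases ?_ ?_ j
      · rw [hβ'_def, Fin.snoc_last]; linarith
      · intro i; rw [hβ'_def, Fin.snoc_castSucc]; exact hβ _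
    set C := Real.Gamma (βa + 1) * Real.Gamma (βb + 1) / Real.Gamma (βa + βb + 2) with hC_def
    have hGa : 0 < Real.Gamma (βa + 1) := Real.Gamma_pos_of_pos (by linarith)
    have hGb : 0 < Real.Gamma (βb + 1) := Real.Gamma_pos_of_pos (by linarith)
    have hGab : 0 < Real.Gamma (βa + βb + 2) := Real.Gamma_pos_of_pos (by linarith)
    have hC : 0 ≤ C := by rw [hC_def]; positivity
    -- the product over the first m gaps
    set Pf : (Fin (m+1) → ℝ) → ℝ :=
      fun y => ∏ j : Fin m, (y j.succ - y j.castSucc) ^ (β j.castSucc.castSucc) with hPf_def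
    -- splitting the integrand at a snoc point
    have hsplit : ∀ (y : Fin (m+1) → ℝ) (x : ℝ),
        simplexIntegrand (m+2) t β (Fin.snoc y x)
          = Pf y * (x - y (Fin.last m)) ^ βa * (t - x) ^ βb := by
      intro y x
      unfold simplexIntegrand
      rw [Fin.prod_univ_castSucc, Fin.prod_univ_castSucc]
      congr 1
      · congr 1
        · rw [hPf_def]
          refine Finset.prod_congr rfl fun j _ => ?_
          have hj : ((j.castSucc.castSucc : Fin (m+2)) : ℕ) + 1 < m + 2 := by
            simp only [Fin.coe_castSucc]; omega
          rw [dif_pos hj]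
          have e1 : (⟨((j.castSucc.castSucc : Fin (m+2)) : ℕ) + 1, hj⟩ : Fin (m+2))
              = Fin.castSucc j.succ := by ext; simp
          rw [e1, Fin.snoc_castSucc, Fin.snoc_castSucc]
        · have hj : ((Fin.castSucc (Fin.last m) : Fin (m+2)) : ℕ) + 1 < m + 2 := by simp
          rw [dif_pos hj]
          have e1 : (⟨((Fin.castSucc (Fin.last m) : Fin (m+2)) : ℕ) + 1, hj⟩ : Fin (m+2))
              = Fin.last (m+1) := by ext; simp
          rw [e1, Fin.snoc_last, Fin.snoc_castSucc, hβa_def]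
      · have hj : ¬ (((Fin.last (m+1) : Fin (m+2)) : ℕ) + 1 < m + 2) := by simp
        rw [dif_neg hj, Fin.snoc_last, hβb_def]
    -- the integrand for the reduced problem
    have hsplit' : ∀ y : Fin (m+1) → ℝ,
        simplexIntegrand (m+1) t β' y
          = Pf y * (t - y (Fin.last m)) ^ (βa + βb + 1) := by
      intro y
      unfold simplexIntegrand
      rw [Fin.prod_univ_castSucc]
      congr 1
      · rw [hPf_def]
        refine Finset.prod_congr rfl fun j _ => ?_
        have hj : ((j.castSucc : Fin (m+1)) : ℕ) + 1 < m + 1 := by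
          simp only [Fin.coe_castSucc]; omega
        rw [dif_pos hj]
        have e1 : (⟨((j.castSucc : Fin (m+1)) : ℕ) + 1, hj⟩ : Fin (m+1)) = j.succ := by
          ext; simp
        rw [e1]
        rw [hβ'_def, Fin.snoc_castSucc]
      · have hj : ¬ (((Fin.last m : Fin (m+1)) : ℕ) + 1 < m + 1) := by simp
        rw [dif_neg hj]
        rw [hβ'_def, Fin.snoc_last]
    -- membership characterization
    have hmem : ∀ (y : Fin (m+1) → ℝ) (x : ℝ),
        Fin.snoc y x ∈ simplexSet (m+2) t
          ↔ y ∈ simplexSet (m+1) t ∧ x ∈ Set.Ioo (y (Fin.last m)) t := by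
      intro y x
      constructor
      · rintro ⟨h1, h2⟩
        have hyj : ∀ j : Fin (m+1), 0 < y j ∧ y j < t := by
          intro j
          have := h1 j.castSucc
          rwa [Fin.snoc_castSucc] at this
        have hylt : y (Fin.last m) < x := by
          have := h2 (Fin.castSucc_lt_last (Fin.last m))
          rwa [Fin.snoc_castSucc, Fin.snoc_last] at this
        have hxt : x < t := by
          have := h1 (Fin.last (m+1))
          rw [Fin.snoc_last] at this
          exact this.2
        refine ⟨⟨hyj, fun i j hij => ?_⟩, hylt, hxt⟩
        have := h2 (Fin.castSucc_lt_castSucc_iff.mpr hij)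
        rwa [Fin.snoc_castSucc, Fin.snoc_castSucc] at this
      · rintro ⟨⟨h1, h2⟩, hx1, hx2⟩
        constructor
        · intro j
          refine Fin.lastCases ?_ ?_ j
          · rw [Fin.snoc_last]
            exact ⟨lt_trans (h1 (Fin.last m)).1 hx1, hx2⟩
          · intro i; rw [Fin.snoc_castSucc]; exact h1 i
        · intro i j hij
          rcases Fin.eq_castSucc_or_eq_last j with ⟨j', rfl⟩ | rfl
          · have hi : i ≠ Fin.last (m+1) := by
              intro h; rw [h] at hij
              exact absurd hij (not_lt.mpr (Fin.le_last _))
            obtain ⟨i', rfl⟩ := Fin.exists_castSucc_eq.mpr hi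
            rw [Fin.snoc_castSucc, Fin.snoc_castSucc]
            exact h2 (Fin.castSucc_lt_castSucc_iff.mp hij)
          · have hi : i ≠ Fin.last (m+1) := ne_of_lt hij
            obtain ⟨i', rfl⟩ := Fin.exists_castSucc_eq.mpr hi
            rw [Fin.snoc_castSucc, Fin.snoc_last]
            calc y i' ≤ y (Fin.last m) := h2.monotone (Fin.le_last i')
              _ < x := hx1
    have hPnn : ∀ y : Fin (m+1) → ℝ, y ∈ simplexSet (m+1) t → 0 ≤ Pf y := by
      intro y hy
      refine Finset.prod_nonneg fun j _ => Real.rpow_nonneg ?_ _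
      have := hy.2 (Fin.castSucc_lt_succ (i := j))
      linarith
    -- measure-theoretic setup
    set f : (Fin (m+2) → ℝ) → ℝ≥0∞ :=
      fun u => ENNReal.ofReal (simplexIntegrand (m+2) t β u) with hf_def
    have hfm : Measurable f := (measurable_simplexIntegrand _ _ _).ennreal_ofReal
    have hS := measurableSet_simplexSet (m+2) t
    have hindm : Measurable ((simplexSet (m+2) t).indicator f) := hfm.indicator hS
    set e := MeasurableEquiv.piFinSuccAbove (fun _ : Fin (m+2) => ℝ) (Fin.last (m+1)) with he_def
    have hmp : MeasurePreserving e.symm volume volume :=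
      (volume_preserving_piFinSuccAbove (fun _ : Fin (m+2) => ℝ) (Fin.last (m+1))).symm e
    have hesymm : ∀ p : ℝ × (Fin (m+1) → ℝ), e.symm p = Fin.snoc p.2 p.1 := by
      intro p; rw [he_def]; simp [MeasurableEquiv.piFinSuccAbove, Fin.snocEquiv]
    set g : ℝ × (Fin (m+1) → ℝ) → ℝ≥0∞ :=
      fun p => (simplexSet (m+2) t).indicator f (Fin.snoc p.2 p.1) with hg_def
    have hgm : Measurable g := by
      have : g = (simplexSet (m+2) t).indicator f ∘ e.symm := by
        funext p; rw [hg_def]; simp [hesymm p]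
      rw [this]
      exact hindm.comp e.symm.measurable
    -- the inner integral
    have inner : ∀ y : Fin (m+1) → ℝ,
        (∫⁻ x : ℝ, (simplexSet (m+2) t).indicator f (Fin.snoc y x))
          = (simplexSet (m+1) t).indicator
              (fun y => ENNReal.ofReal C
                * ENNReal.ofReal (simplexIntegrand (m+1) t β' y)) y := by
      intro y
      by_cases hy : y ∈ simplexSet (m+1) t
      · rw [Set.indicator_of_mem hy]
        have hyt : y (Fin.last m) < t := (hy.1 (Fin.last m)).2
        have e1 : ∀ x : ℝ, (simplexSet (m+2) t).indicator f (Fin.snoc y x)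
            = (Set.Ioo (y (Fin.last m)) t).indicator (fun x => f (Fin.snoc y x)) x := by
          intro x
          by_cases hx : x ∈ Set.Ioo (y (Fin.last m)) t
          · rw [Set.indicator_of_mem hx, Set.indicator_of_mem ((hmem y x).mpr ⟨hy, hx⟩)]
          · rw [Set.indicator_of_notMem hx,
              Set.indicator_of_notMem (fun hc => hx ((hmem y x).mp hc).2)]
        rw [lintegral_congr e1, lintegral_indicator measurableSet_Ioo]
        have hP := hPnn y hy
        have e2 : ∀ x ∈ Set.Ioo (y (Fin.last m)) t,
            f (Fin.snoc y x) = ENNReal.ofReal (Pf y)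
              * ENNReal.ofReal ((x - y (Fin.last m)) ^ βa * (t - x) ^ βb) := by
          intro x _
          rw [hf_def]
          simp only
          rw [hsplit y x, mul_assoc, ENNReal.ofReal_mul hP]
        rw [setLIntegral_congr_fun measurableSet_Ioo e2,
          lintegral_const_mul' _ _ ENNReal.ofReal_ne_top,
          beta_Ioo hyt hβa hβb, hsplit' y,
          ← ENNReal.ofReal_mul hP, ← ENNReal.ofReal_mul hC]
        congr 1
        rw [hC_def]
        ring
      · rw [Set.indicator_of_notMem hy]
        have e0 : ∀ x : ℝ, (simplexSet (m+2) t).indicator f (Fin.snoc y x) = 0 := fun x =>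
          Set.indicator_of_notMem (fun hc => hy ((hmem y x).mp hc).1) f
        rw [lintegral_congr e0, lintegral_zero]
    -- main calculation
    have main : (∫⁻ u in simplexSet (m+2) t, ENNReal.ofReal (simplexIntegrand (m+2) t β u))
        = ENNReal.ofReal C
          * ENNReal.ofReal ((∏ j, Real.Gamma (β' j + 1))
              / Real.Gamma ((∑ j, β' j) + (m+1 : ℕ) + 1) * t ^ ((∑ j, β' j) + (m+1 : ℕ))) := by
      calc ∫⁻ u in simplexSet (m+2) t, ENNReal.ofReal (simplexIntegrand (m+2) t β u)
          = ∫⁻ u, (simplexSet (m+2) t).indicator f u := (lintegral_indicator hS f).symm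
        _ = ∫⁻ p : ℝ × (Fin (m+1) → ℝ), g p := by
            rw [← hmp.lintegral_comp hindm]
            refine lintegral_congr fun p => ?_
            rw [hg_def]; simp [hesymm p]
        _ = ∫⁻ x : ℝ, ∫⁻ y : Fin (m+1) → ℝ, g (x, y) := by
            rw [MeasureTheory.Measure.volume_eq_prod]
            exact lintegral_prod _ hgm.aemeasurable
        _ = ∫⁻ y : Fin (m+1) → ℝ, ∫⁻ x : ℝ, g (x, y) := by
            refine lintegral_lintegral_swap ?_
            have : Function.uncurry (fun (x : ℝ) (y : Fin (m+1) → ℝ) => g (x, y)) = g := rfl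
            rw [this]
            exact hgm.aemeasurable
        _ = ∫⁻ y : Fin (m+1) → ℝ, (simplexSet (m+1) t).indicator
              (fun y => ENNReal.ofReal C
                * ENNReal.ofReal (simplexIntegrand (m+1) t β' y)) y :=
            lintegral_congr fun y => inner y
        _ = ∫⁻ y in simplexSet (m+1) t,
              ENNReal.ofReal C * ENNReal.ofReal (simplexIntegrand (m+1) t β' y) :=
            lintegral_indicator (measurableSet_simplexSet (m+1) t) _
        _ = ENNReal.ofReal C
              * ∫⁻ y in simplexSet (m+1) t, ENNReal.ofReal (simplexIntegrand (m+1) t β' y) :=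
            lintegral_const_mul' _ _ ENNReal.ofReal_ne_top
        _ = ENNReal.ofReal C
              * ENNReal.ofReal ((∏ j, Real.Gamma (β' j + 1))
                  / Real.Gamma ((∑ j, β' j) + (m+1 : ℕ) + 1)
                  * t ^ ((∑ j, β' j) + (m+1 : ℕ))) := by rw [IH t ht β' hβ']
    rw [main, ← ENNReal.ofReal_mul hC]
    congr 1
    -- now pure real arithmetic
    have hsum : (∑ j, β' j) = (∑ j : Fin (m+2), β j) + 1 := by
      rw [Fin.sum_univ_castSucc (f := β'), Fin.sum_univ_castSucc (f := β),
        Fin.sum_univ_castSucc (f := fun j : Fin (m+1) => β j.castSucc)]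
      simp only [hβ'_def, Fin.snoc_castSucc, Fin.snoc_last]
      rw [hβa_def, hβb_def]
      ring
    have hprod : (∏ j, Real.Gamma (β' j + 1))
        = (∏ j : Fin m, Real.Gamma (β j.castSucc.castSucc + 1))
          * Real.Gamma (βa + βb + 2) := by
      rw [Fin.prod_univ_castSucc (f := fun j => Real.Gamma (β' j + 1))]
      simp only [hβ'_def, Fin.snoc_castSucc, Fin.snoc_last]
      rw [show βa + βb + 1 + 1 = βa + βb + 2 by ring]
    have hprod2 : (∏ j : Fin (m+2), Real.Gamma (β j + 1))
        = (∏ j : Fin m, Real.Gamma (β j.castSucc.castSucc + 1))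
          * Real.Gamma (βa + 1) * Real.Gamma (βb + 1) := by
      rw [Fin.prod_univ_castSucc (f := fun j => Real.Gamma (β j + 1)),
        Fin.prod_univ_castSucc (f := fun j : Fin (m+1) => Real.Gamma (β j.castSucc + 1))]
    have hCprod : C * (∏ j, Real.Gamma (β' j + 1))
        = ∏ j : Fin (m+2), Real.Gamma (β j + 1) := by
      rw [hprod, hprod2, hC_def]
      field_simp
    obtain ⟨Q, hQ⟩ : ∃ Q, (∏ j, Real.Gamma (β' j + 1)) = Q := ⟨_, rfl⟩
    rw [hQ] at hCprod
    rw [hsum, ← hCprod, hQ]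
    push_cast
    ring_nf

theorem simplex_beta_integral (n : ℕ) (hn : 1 ≤ n) (t : ℝ) (ht : 0 < t)
    (β : Fin n → ℝ) (hβ : ∀ j, -1 < β j) :
    ∫ u in {u : Fin n → ℝ | (∀ j, 0 < u j ∧ u j < t) ∧ StrictMono u},
        ∏ j : Fin n,
          ((if h : (j : ℕ) + 1 < n then u ⟨(j : ℕ) + 1, h⟩ else t) - u j) ^ (β j)
      = (∏ j : Fin n, Real.Gamma (β j + 1)) / Real.Gamma ((∑ j : Fin n, β j) + n + 1)
          * t ^ ((∑ j : Fin n, β j) + n) := by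
  obtain ⟨m, rfl⟩ : ∃ m, n = m + 1 := ⟨n - 1, (Nat.succ_pred_eq_of_pos hn).symm⟩
  show (∫ u in simplexSet (m+1) t, simplexIntegrand (m+1) t β u)
    = (∏ j : Fin (m+1), Real.Gamma (β j + 1))
        / Real.Gamma ((∑ j : Fin (m+1), β j) + (m+1 : ℕ) + 1)
        * t ^ ((∑ j : Fin (m+1), β j) + (m+1 : ℕ))
  have hnn : 0 ≤ᵐ[volume.restrict (simplexSet (m+1) t)] simplexIntegrand (m+1) t β := by
    refine (ae_restrict_iff' (measurableSet_simplexSet _ _)).mpr (Filter.Eventually.of_forall ?_)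
    intro u hu
    unfold simplexIntegrand
    refine Finset.prod_nonneg fun j _ => Real.rpow_nonneg ?_ _
    split_ifs with h
    · have hlt : j < (⟨(j : ℕ) + 1, h⟩ : Fin (m+1)) := by simp [Fin.lt_def]
      have := hu.2 hlt
      linarith
    · have := (hu.1 j).2
      linarith
  have hmeas : AEStronglyMeasurable (simplexIntegrand (m+1) t β)
      (volume.restrict (simplexSet (m+1) t)) :=
    (measurable_simplexIntegrand _ _ _).aestronglyMeasurable
  rw [MeasureTheory.integral_eq_lintegral_of_nonneg_ae hnn hmeas,
    simplex_lintegral m t ht β hβ]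
  have hsum : -(((m+1 : ℕ)) : ℝ) < ∑ j, β j := by
    have h1 : (∑ _j : Fin (m+1), (-1 : ℝ)) < ∑ j, β j :=
      Finset.sum_lt_sum_of_nonempty Finset.univ_nonempty (fun j _ => hβ j)
    simpa using h1
  have hX : 0 ≤ (∏ j : Fin (m+1), Real.Gamma (β j + 1))
      / Real.Gamma ((∑ j : Fin (m+1), β j) + (m+1 : ℕ) + 1)
      * t ^ ((∑ j : Fin (m+1), β j) + (m+1 : ℕ)) := by
    have h1 : 0 ≤ ∏ j : Fin (m+1), Real.Gamma (β j + 1) :=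
      Finset.prod_nonneg fun j _ => (Real.Gamma_pos_of_pos (by linarith [hβ j])).le
    have h2 : 0 < Real.Gamma ((∑ j : Fin (m+1), β j) + (m+1 : ℕ) + 1) :=
      Real.Gamma_pos_of_pos (by linarith)
    exact mul_nonneg (div_nonneg h1 h2.le) (Real.rpow_nonneg ht.le _)
  rw [ENNReal.toReal_ofReal hX]
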